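/- Let w ∈ A₂ on ℝ^N. Then there is a constant C depending only on N such that for every axis-parallel cube Q ⊂ ℝ^N, ∫_Q M(w·1_Q)(x) dx ≤ C·[w]_{A₂}·w(Q), where M denotes the Hardy–Littlewood maximal operator Mf(x) := sup{ ⨍_R |f| dy : R an axis-parallel cube with x ∈ R } and w(Q) := ∫_Q w dx. -/

import Mathlib

set_option maxHeartbeats 1000000

open MeasureTheory
open scoped ENNReal

noncomputable section

/-- Points of `ℝ^N`, as `Fin N → ℝ`. -/
abbrev Euc (N : ℕ) := Fin N → ℝ

/-- The axis-parallel half-open cube with lower-left corner `c` and sidelength `l`. -/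
def cube {N : ℕ} (c : Euc N) (l : ℝ) : Set (Euc N) :=
  {x | ∀ i, c i ≤ x i ∧ x i < c i + l}

/-- The set of all local `A₂` products `(⨍_Q w)(⨍_Q w⁻¹)` over axis-parallel cubes `Q`. -/
def A2set {N : ℕ} (w : Euc N → ℝ) : Set ℝ :=
  {t | ∃ (c : Euc N) (l : ℝ), 0 < l ∧
    t = (⨍ x in cube c l, w x) * (⨍ x in cube c l, (w x)⁻¹)}

/-- The `A₂` characteristic `[w]_{A₂} = sup_Q (⨍_Q w)(⨍_Q w⁻¹)`. -/
def A2const {N : ℕ} (w : Euc N → ℝ) : ℝ := sSup (A2set w)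

/-- `w` is an `A₂` weight: positive, with `w` and `w⁻¹` locally integrable, and with
finite `A₂` characteristic (the set of local `A₂` products is bounded above). -/
structure IsA2Weight {N : ℕ} (w : Euc N → ℝ) : Prop where
  meas : Measurable w
  pos : ∀ x, 0 < w x
  locInt : LocallyIntegrable w volume
  locIntInv : LocallyIntegrable (fun x => (w x)⁻¹) volume
  bddA2 : BddAbove (A2set w)

/-- The Hardy–Littlewood maximal function over axis-parallel cubes (with values
in `[0,∞]`). -/
def maximalFn {N : ℕ} (f : Euc N → ℝ) (x : Euc N) : ℝ≥0∞ :=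
  ⨆ (c : Euc N) (l : ℝ) (_ : 0 < l) (_ : x ∈ cube c l),
    ENNReal.ofReal (⨍ y in cube c l, |f y|)

/-! ### Auxiliary development -/

section Aux

variable {N : ℕ}

/-- A cube as a product of `Ico`s. -/
theorem st18_cube_eq_pi (c : Euc N) (l : ℝ) :
    cube c l = Set.pi Set.univ (fun i => Set.Ico (c i) (c i + l)) := by
  ext x; simp [cube, Set.mem_pi, Set.mem_Ico]

theorem st18_measurableSet_cube (c : Euc N) (l : ℝ) : MeasurableSet (cube c l) := by
  rw [st18_cube_eq_pi]
  exact MeasurableSet.univ_pi (fun i => measurableSet_Ico)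

theorem st18_volume_cube (c : Euc N) (l : ℝ) :
    volume (cube c l) = ENNReal.ofReal l ^ N := by
  rw [st18_cube_eq_pi, volume_pi_pi]
  simp [Real.volume_Ico]

theorem st18_isBounded_cube (c : Euc N) (l : ℝ) : Bornology.IsBounded (cube c l) := by
  apply Bornology.IsBounded.subset (Metric.isBounded_closedBall (x := c) (r := |l|))
  intro x hx
  rw [Metric.mem_closedBall, dist_pi_le_iff (abs_nonneg l)]
  intro i
  rw [Real.dist_eq, abs_le]
  have h1 := (hx i).1
  have h2 := (hx i).2
  constructor
  · have : 0 ≤ x i - c i := by linarith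
    have : -(0:ℝ) ≤ x i - c i := by linarith
    have hl : -|l| ≤ 0 := neg_nonpos.mpr (abs_nonneg l)
    linarith
  · have : x i - c i < l := by linarith
    exact le_trans (le_of_lt this) (le_abs_self l)

theorem st18_integrableOn_of_subset_cube {f : Euc N → ℝ} (hf : LocallyIntegrable f volume)
    {S : Set (Euc N)} (a : Euc N) (s : ℝ) (hS : S ⊆ cube a s) : IntegrableOn f S volume := by
  have : IntegrableOn f (closure (cube a s)) volume :=
    hf.integrableOn_isCompact ((st18_isBounded_cube a s).isCompact_closure)
  exact this.mono_set (hS.trans subset_closure)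

end Aux

section Weight

variable {N : ℕ}

/-- `ν(S) = ∫_S w` as an extended real. -/
def st18nu (w : Euc N → ℝ) (S : Set (Euc N)) : ℝ≥0∞ := ∫⁻ x in S, ENNReal.ofReal (w x)

/-- `τ(S) = ∫_S w⁻¹` as an extended real. -/
def st18tau (w : Euc N → ℝ) (S : Set (Euc N)) : ℝ≥0∞ := ∫⁻ x in S, ENNReal.ofReal ((w x)⁻¹)

theorem st18nu_mono (w : Euc N → ℝ) {S T : Set (Euc N)} (h : S ⊆ T) :
    st18nu w S ≤ st18nu w T := lintegral_mono_set h

theorem st18tau_mono (w : Euc N → ℝ) {S T : Set (Euc N)} (h : S ⊆ T) :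
    st18tau w S ≤ st18tau w T := lintegral_mono_set h

theorem st18nu_eq_ofReal {w : Euc N → ℝ} (hw : IsA2Weight w) {S : Set (Euc N)}
    (hS : IntegrableOn w S volume) :
    st18nu w S = ENNReal.ofReal (∫ x in S, w x) := by
  rw [MeasureTheory.ofReal_integral_eq_lintegral_ofReal hS
    (Filter.Eventually.of_forall (fun x => le_of_lt (hw.pos x)))]
  rfl

theorem st18tau_eq_ofReal {w : Euc N → ℝ} (hw : IsA2Weight w) {S : Set (Euc N)}
    (hS : IntegrableOn (fun x => (w x)⁻¹) S volume) :
    st18tau w S = ENNReal.ofReal (∫ x in S, (w x)⁻¹) := by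
  rw [MeasureTheory.ofReal_integral_eq_lintegral_ofReal hS
    (Filter.Eventually.of_forall (fun x => le_of_lt (inv_pos.mpr (hw.pos x))))]
  rfl

theorem st18nu_lt_top {w : Euc N → ℝ} (hw : IsA2Weight w) {S : Set (Euc N)}
    (a : Euc N) (s : ℝ) (hS : S ⊆ cube a s) : st18nu w S < ∞ := by
  have hint : IntegrableOn w S volume := st18_integrableOn_of_subset_cube hw.locInt a s hS
  rw [st18nu_eq_ofReal hw hint]
  exact ENNReal.ofReal_lt_top

theorem st18tau_lt_top {w : Euc N → ℝ} (hw : IsA2Weight w) {S : Set (Euc N)}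
    (a : Euc N) (s : ℝ) (hS : S ⊆ cube a s) : st18tau w S < ∞ := by
  have hint : IntegrableOn (fun x => (w x)⁻¹) S volume :=
    st18_integrableOn_of_subset_cube hw.locIntInv a s hS
  rw [st18tau_eq_ofReal hw hint]
  exact ENNReal.ofReal_lt_top

theorem st18nu_pos {w : Euc N → ℝ} (hw : IsA2Weight w) {S : Set (Euc N)}
    (hSm : MeasurableSet S) (hS : volume S ≠ 0) : 0 < st18nu w S := by
  rw [pos_iff_ne_zero]
  intro h0
  have hmeas : Measurable (fun x => ENNReal.ofReal (w x)) :=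
    ENNReal.measurable_ofReal.comp hw.meas
  rw [st18nu, lintegral_eq_zero_iff hmeas] at h0
  rw [Filter.EventuallyEq, ae_restrict_iff' hSm] at h0
  have h1 : ∀ᵐ x ∂(volume : Measure (Euc N)), x ∉ S := by
    filter_upwards [h0] with x hx
    intro hxS
    have := hx hxS
    simp only [Pi.zero_apply] at this
    have hpos := hw.pos x
    rw [ENNReal.ofReal_eq_zero] at this
    linarith
  have h2 : {a | ¬ a ∉ S} = S := by ext y; simp
  have h3 := ae_iff.mp h1
  rw [h2] at h3
  exact hS h3

theorem st18tau_pos {w : Euc N → ℝ} (hw : IsA2Weight w) {S : Set (Euc N)}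
    (hSm : MeasurableSet S) (hS : volume S ≠ 0) : 0 < st18tau w S := by
  rw [pos_iff_ne_zero]
  intro h0
  have hmeas : Measurable (fun x => ENNReal.ofReal ((w x)⁻¹)) :=
    ENNReal.measurable_ofReal.comp hw.meas.inv
  rw [st18tau, lintegral_eq_zero_iff hmeas] at h0
  rw [Filter.EventuallyEq, ae_restrict_iff' hSm] at h0
  have h1 : ∀ᵐ x ∂(volume : Measure (Euc N)), x ∉ S := by
    filter_upwards [h0] with x hx
    intro hxS
    have := hx hxS
    simp only [Pi.zero_apply] at this
    have hpos := inv_pos.mpr (hw.pos x)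
    rw [ENNReal.ofReal_eq_zero] at this
    linarith
  have h2 : {a | ¬ a ∉ S} = S := by ext y; simp
  have h3 := ae_iff.mp h1
  rw [h2] at h3
  exact hS h3

end Weight

section A2CS

variable {N : ℕ}

/-- The `A₂` inequality on a cube, in `ℝ≥0∞` form. -/
theorem st18_a2_bound {w : Euc N → ℝ} (hw : IsA2Weight w) (a : Euc N) {s : ℝ} (hs : 0 < s) :
    st18nu w (cube a s) * st18tau w (cube a s)
      ≤ ENNReal.ofReal (A2const w) * (volume (cube a s) * volume (cube a s)) := by
  set K := cube a s with hK
  have hKm : MeasurableSet K := st18_measurableSet_cube a s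
  have hvol : volume K = ENNReal.ofReal s ^ N := st18_volume_cube a s
  have hvolne : volume K ≠ ∞ := by rw [hvol]; exact ENNReal.pow_ne_top ENNReal.ofReal_ne_top
  have hvolpos : volume K ≠ 0 := by
    rw [hvol]
    exact pow_ne_zero _ (by simpa [ENNReal.ofReal_eq_zero] using not_le.mpr hs)
  have htReal : 0 < (volume K).toReal := ENNReal.toReal_pos hvolpos hvolne
  have hiw : IntegrableOn w K volume := st18_integrableOn_of_subset_cube hw.locInt a s le_rfl.subset
  have hit : IntegrableOn (fun x => (w x)⁻¹) K volume :=
    st18_integrableOn_of_subset_cube hw.locIntInv a s le_rfl.subset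
  -- membership in A2set
  have hmem : ((⨍ x in K, w x) * (⨍ x in K, (w x)⁻¹)) ∈ A2set w := ⟨a, s, hs, rfl⟩
  have hle : (⨍ x in K, w x) * (⨍ x in K, (w x)⁻¹) ≤ A2const w := le_csSup hw.bddA2 hmem
  rw [setAverage_eq, setAverage_eq] at hle
  simp only [smul_eq_mul] at hle
  have hIw : 0 ≤ ∫ x in K, w x :=
    setIntegral_nonneg hKm (fun x _ => le_of_lt (hw.pos x))
  have hIt : 0 ≤ ∫ x in K, (w x)⁻¹ :=
    setIntegral_nonneg hKm (fun x _ => le_of_lt (inv_pos.mpr (hw.pos x)))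
  have hreal : (∫ x in K, w x) * (∫ x in K, (w x)⁻¹)
      ≤ A2const w * ((volume K).toReal * (volume K).toReal) := by
    have h2 := mul_le_mul_of_nonneg_left hle (le_of_lt (mul_pos htReal htReal))
    calc (∫ x in K, w x) * (∫ x in K, (w x)⁻¹)
        = ((volume K).toReal * (volume K).toReal) *
            (((volume K).toReal⁻¹ * ∫ x in K, w x) * ((volume K).toReal⁻¹ * ∫ x in K, (w x)⁻¹)) := by
          field_simp
      _ ≤ ((volume K).toReal * (volume K).toReal) * A2const w := h2
      _ = A2const w * ((volume K).toReal * (volume K).toReal) := by ring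
  calc st18nu w K * st18tau w K
      = ENNReal.ofReal ((∫ x in K, w x) * (∫ x in K, (w x)⁻¹)) := by
        rw [st18nu_eq_ofReal hw hiw, st18tau_eq_ofReal hw hit, ENNReal.ofReal_mul hIw]
    _ ≤ ENNReal.ofReal (A2const w * ((volume K).toReal * (volume K).toReal)) :=
        ENNReal.ofReal_le_ofReal hreal
    _ = ENNReal.ofReal (A2const w) * (volume K * volume K) := by
        have h0A : 0 ≤ A2const w :=
          le_trans (mul_nonneg (mul_nonneg (inv_nonneg.mpr htReal.le) hIw)
            (mul_nonneg (inv_nonneg.mpr htReal.le) hIt)) hle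
        rw [ENNReal.ofReal_mul h0A, ENNReal.ofReal_mul (le_of_lt htReal),
          ENNReal.ofReal_toReal hvolne]

/-- Cauchy–Schwarz: `|S|² ≤ ν(S) τ(S)`. -/
theorem st18_cs_bound {w : Euc N → ℝ} (hw : IsA2Weight w) {S : Set (Euc N)}
    (hSm : MeasurableSet S) :
    volume S * volume S ≤ st18nu w S * st18tau w S := by
  set f : Euc N → ℝ≥0∞ := fun x => (ENNReal.ofReal (w x)) ^ ((1:ℝ)/2) with hf
  set g : Euc N → ℝ≥0∞ := fun x => (ENNReal.ofReal ((w x)⁻¹)) ^ ((1:ℝ)/2) with hg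
  have hfg : ∀ x, (f * g) x = 1 := by
    intro x
    have hwx := hw.pos x
    have : ENNReal.ofReal (w x) * ENNReal.ofReal ((w x)⁻¹) = 1 := by
      rw [← ENNReal.ofReal_mul (le_of_lt hwx), mul_inv_cancel₀ (ne_of_gt hwx)]
      exact ENNReal.ofReal_one
    simp only [Pi.mul_apply, hf, hg]
    rw [← ENNReal.mul_rpow_of_nonneg _ _ (by norm_num : (0:ℝ) ≤ 1/2), this, ENNReal.one_rpow]
  have hconj : Real.HolderConjugate 2 2 := Real.HolderConjugate.two_two
  have hfmeas : AEMeasurable f (volume.restrict S) :=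
    ((ENNReal.measurable_ofReal.comp hw.meas).pow_const _).aemeasurable
  have hgmeas : AEMeasurable g (volume.restrict S) :=
    ((ENNReal.measurable_ofReal.comp hw.meas.inv).pow_const _).aemeasurable
  have hH := ENNReal.lintegral_mul_le_Lp_mul_Lq (volume.restrict S) hconj hfmeas hgmeas
  have hfp : ∀ x, f x ^ (2:ℝ) = ENNReal.ofReal (w x) := by
    intro x
    rw [hf, ← ENNReal.rpow_mul]
    norm_num
  have hgp : ∀ x, g x ^ (2:ℝ) = ENNReal.ofReal ((w x)⁻¹) := by
    intro x
    rw [hg, ← ENNReal.rpow_mul]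
    norm_num
  have hL : ∫⁻ x in S, (f * g) x = volume S := by
    rw [lintegral_congr hfg, setLIntegral_one]
  have hR : (∫⁻ x in S, f x ^ (2:ℝ)) = st18nu w S := lintegral_congr (fun x => hfp x)
  have hR2 : (∫⁻ x in S, g x ^ (2:ℝ)) = st18tau w S := lintegral_congr (fun x => hgp x)
  rw [hL, hR, hR2] at hH
  -- hH : volume S ≤ ν^(1/2) * τ^(1/2)
  calc volume S * volume S
      ≤ (st18nu w S ^ ((1:ℝ)/2) * st18tau w S ^ ((1:ℝ)/2)) *
        (st18nu w S ^ ((1:ℝ)/2) * st18tau w S ^ ((1:ℝ)/2)) := mul_le_mul' hH hH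
    _ = (st18nu w S ^ ((1:ℝ)/2) * st18nu w S ^ ((1:ℝ)/2)) *
        (st18tau w S ^ ((1:ℝ)/2) * st18tau w S ^ ((1:ℝ)/2)) := by ring
    _ = st18nu w S * st18tau w S := by
        rw [← ENNReal.rpow_add_of_nonneg (1/2) (1/2) (by norm_num) (by norm_num)]
        rw [← ENNReal.rpow_add_of_nonneg (1/2) (1/2) (by norm_num) (by norm_num)]
        norm_num

/-- `1 ≤ [w]` (in `ℝ≥0∞` form). -/
theorem st18_one_le_A {w : Euc N → ℝ} (hw : IsA2Weight w) (a : Euc N) {s : ℝ} (hs : 0 < s) :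
    1 ≤ ENNReal.ofReal (A2const w) := by
  set K := cube a s
  have hvol : volume K = ENNReal.ofReal s ^ N := st18_volume_cube a s
  have hvolne : volume K ≠ ∞ := by rw [hvol]; exact ENNReal.pow_ne_top ENNReal.ofReal_ne_top
  have hvolpos : volume K ≠ 0 := by
    rw [hvol]
    exact pow_ne_zero _ (by simpa [ENNReal.ofReal_eq_zero] using not_le.mpr hs)
  have h1 := st18_cs_bound hw (S := K) (st18_measurableSet_cube a s)
  have h2 := st18_a2_bound hw a hs
  have h3 : (1:ℝ≥0∞) * (volume K * volume K) ≤
      ENNReal.ofReal (A2const w) * (volume K * volume K) := by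
    rw [one_mul]
    exact le_trans h1 h2
  have hne0 : volume K * volume K ≠ 0 := mul_ne_zero hvolpos hvolpos
  have hnet : volume K * volume K ≠ ∞ := ENNReal.mul_ne_top hvolne hvolne
  exact (ENNReal.mul_le_mul_iff_left hne0 hnet).mp h3

theorem st18_A2const_pos {w : Euc N → ℝ} (hw : IsA2Weight w) (a : Euc N) {s : ℝ} (hs : 0 < s) :
    0 < A2const w := by
  by_contra h
  push_neg at h
  have := st18_one_le_A hw (N := N) a hs
  rw [ENNReal.ofReal_eq_zero.mpr h] at this
  simp at this

end A2CS

section AvgConv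

variable {N : ℕ}

/-- Conversion of the real cube-average of `|1_Q w|` into `ν(Q∩R)/|R|`. -/
theorem st18_ofReal_avg {w : Euc N → ℝ} (hw : IsA2Weight w) (cQ : Euc N) (lQ : ℝ)
    (a : Euc N) {s : ℝ} (hs : 0 < s) :
    ENNReal.ofReal (⨍ y in cube a s, |(cube cQ lQ).indicator w y|)
      = st18nu w (cube cQ lQ ∩ cube a s) / volume (cube a s) := by
  set Q := cube cQ lQ
  set R := cube a s
  have hQm : MeasurableSet Q := st18_measurableSet_cube cQ lQ
  have hRm : MeasurableSet R := st18_measurableSet_cube a s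
  have hvol : volume R = ENNReal.ofReal s ^ N := st18_volume_cube a s
  have hvolne : volume R ≠ ∞ := by rw [hvol]; exact ENNReal.pow_ne_top ENNReal.ofReal_ne_top
  have hvolpos : volume R ≠ 0 := by
    rw [hvol]
    exact pow_ne_zero _ (by simpa [ENNReal.ofReal_eq_zero] using not_le.mpr hs)
  have hint : IntegrableOn w (Q ∩ R) volume :=
    st18_integrableOn_of_subset_cube hw.locInt a s Set.inter_subset_right
  -- |indicator| = indicator
  have habs : ∀ y, |Q.indicator w y| = Q.indicator w y := by
    intro y
    exact abs_of_nonneg (Set.indicator_nonneg (fun x _ => le_of_lt (hw.pos x)) y)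
  have h1 : (∫ y in R, |Q.indicator w y|) = ∫ y in R, Q.indicator w y :=
    integral_congr_ae (Filter.Eventually.of_forall (fun y => habs y))
  have h2 : (∫ y in R, Q.indicator w y) = ∫ y in Q ∩ R, w y := by
    rw [MeasureTheory.integral_indicator hQm, Measure.restrict_restrict hQm]
  rw [setAverage_eq, smul_eq_mul, h1, h2]
  rw [ENNReal.ofReal_mul (by positivity)]
  rw [measureReal_def, ENNReal.ofReal_inv_of_pos (ENNReal.toReal_pos hvolpos hvolne),
    ENNReal.ofReal_toReal hvolne]
  rw [← st18nu_eq_ofReal hw hint, ENNReal.div_eq_inv_mul]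

end AvgConv

section Clamp

variable {N : ℕ}

/-- Clamping a small cube into `Q`. -/
theorem st18_clamp (c : Euc N) (l : ℝ) (c' : Euc N) (s : ℝ) (hsl : s ≤ l) :
    ∃ a : Euc N, (cube c l ∩ cube c' s ⊆ cube a s) ∧ cube a s ⊆ cube c l := by
  refine ⟨fun i => max (c i) (min (c' i) (c i + l - s)), ?_, ?_⟩
  · rintro x ⟨hxQ, hxR⟩ i
    obtain ⟨h1, h2⟩ := hxQ i
    obtain ⟨h3, h4⟩ := hxR i
    constructor
    · apply max_le h1
      exact le_trans (min_le_left _ _) h3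
    · have hmin : x i - s < min (c' i) (c i + l - s) := by
        apply lt_min
        · linarith
        · linarith
      have := lt_of_lt_of_le hmin (le_max_right (c i) _)
      linarith
  · intro x hx i
    obtain ⟨h1, h2⟩ := hx i
    constructor
    · exact le_trans (le_max_left _ _) h1
    · have : max (c i) (min (c' i) (c i + l - s)) ≤ c i + l - s := by
        apply max_le
        · linarith
        · exact min_le_right _ _
      linarith

end Clamp

section Grid

variable {N : ℕ}

/-- Offset of the two interleaved grids: `0` or `l/3`. -/
def st18off (l : ℝ) : Bool → ℝ := fun b => if b then l/3 else 0

/-- Grid cube of generation `k` in the grid with offsets `α`, index `j`. -/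
def st18gridP (c : Euc N) (l : ℝ) (α : Fin N → Bool) (k : ℕ) (j : Fin N → ℤ) : Set (Euc N) :=
  cube (fun i => c i + st18off l (α i) + j i * (l / 2^k)) (l / 2^k)

theorem st18_mem1d_iff {b D y : ℝ} (hD : 0 < D) (m : ℤ) :
    (b + m*D ≤ y ∧ y < b + m*D + D) ↔ m = ⌊(y - b)/D⌋ := by
  constructor
  · rintro ⟨h1, h2⟩
    symm
    rw [Int.floor_eq_iff]
    constructor
    · rw [le_div_iff₀ hD]; linarith
    · rw [div_lt_iff₀ hD]; push_cast; linarith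
  · intro h
    have h' : ⌊(y - b)/D⌋ = m := h.symm
    rw [Int.floor_eq_iff] at h'
    obtain ⟨h1, h2⟩ := h'
    rw [le_div_iff₀ hD] at h1
    rw [div_lt_iff₀ hD] at h2
    constructor
    · linarith
    · push_cast at h2; linarith

theorem st18_mem_gridP_iff {c : Euc N} {l : ℝ} {α : Fin N → Bool} {k : ℕ} {j : Fin N → ℤ}
    (hD : 0 < l / 2^k) (x : Euc N) :
    x ∈ st18gridP c l α k j ↔ ∀ i, j i = ⌊(x i - (c i + st18off l (α i)))/(l/2^k)⌋ := by
  constructor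
  · intro hx i
    exact (st18_mem1d_iff hD (j i)).mp (hx i)
  · intro hx i
    exact (st18_mem1d_iff hD (j i)).mpr (hx i)

theorem st18_exists_cell {c : Euc N} {l : ℝ} (α : Fin N → Bool) (k : ℕ)
    (hD : 0 < l / 2^k) (x : Euc N) :
    x ∈ st18gridP c l α k (fun i => ⌊(x i - (c i + st18off l (α i)))/(l/2^k)⌋) := by
  rw [st18_mem_gridP_iff hD]
  intro i
  rfl

theorem st18_gridP_disjoint {c : Euc N} {l : ℝ} {α : Fin N → Bool} {k : ℕ}
    {j j' : Fin N → ℤ} (hD : 0 < l / 2^k) (hjj : j ≠ j') :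
    Disjoint (st18gridP c l α k j) (st18gridP c l α k j') := by
  rw [Set.disjoint_left]
  intro x hx hx'
  apply hjj
  funext i
  rw [(st18_mem_gridP_iff hD x).mp hx i, (st18_mem_gridP_iff hD x).mp hx' i]

theorem st18_1d_nest {b D : ℝ} (hD : 0 < D) (M : ℤ) (hM : 0 < M) (m m' : ℤ) (y : ℝ)
    (h1 : b + m*D ≤ y) (h2 : y < b + m*D + D)
    (h3 : b + m'*((M:ℝ)*D) ≤ y) (h4 : y < b + m'*((M:ℝ)*D) + (M:ℝ)*D) :
    ∀ z, b + m*D ≤ z → z < b + m*D + D →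
      (b + m'*((M:ℝ)*D) ≤ z ∧ z < b + m'*((M:ℝ)*D) + (M:ℝ)*D) := by
  have hA : m' * M ≤ m := by
    have hr : ((m' * M : ℤ) : ℝ) * D < ((m : ℤ) : ℝ) * D + D := by push_cast; nlinarith
    have : ((m' * M : ℤ) : ℝ) < (m : ℝ) + 1 := by
      nlinarith
    have : (m' * M : ℤ) < m + 1 := by exact_mod_cast this
    omega
  have hB : m + 1 ≤ (m' + 1) * M := by
    have hr : ((m : ℤ) : ℝ) * D < (((m' + 1) * M : ℤ) : ℝ) * D := by push_cast; nlinarith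
    have : ((m : ℤ) : ℝ) < (((m' + 1) * M : ℤ) : ℝ) := by
      nlinarith
    have : m < (m' + 1) * M := by exact_mod_cast this
    omega
  intro z hz1 hz2
  have hAr : ((m' * M : ℤ) : ℝ) * D ≤ ((m : ℤ) : ℝ) * D := by
    have : ((m' * M : ℤ) : ℝ) ≤ ((m : ℤ) : ℝ) := by exact_mod_cast hA
    nlinarith
  have hBr : ((m : ℤ) : ℝ) * D + D ≤ (((m' + 1) * M : ℤ) : ℝ) * D := by
    have : ((m + 1 : ℤ) : ℝ) ≤ (((m' + 1) * M : ℤ) : ℝ) := by exact_mod_cast hB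
    push_cast at this ⊢
    nlinarith
  constructor
  · push_cast at hAr; nlinarith
  · push_cast at hBr; nlinarith

theorem st18_gridP_nest {c : Euc N} {l : ℝ} (hl : 0 < l) {α : Fin N → Bool}
    {k k' : ℕ} (hkk : k' ≤ k) {j j' : Fin N → ℤ}
    (hne : (st18gridP c l α k j ∩ st18gridP c l α k' j').Nonempty) :
    st18gridP c l α k j ⊆ st18gridP c l α k' j' := by
  obtain ⟨y, hy1, hy2⟩ := hne
  have hD : (0:ℝ) < l / 2^k := by positivity
  have hD' : (0:ℝ) < l / 2^k' := by positivity
  set M : ℤ := 2^(k - k') with hM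
  have hMpos : 0 < M := by positivity
  have hMD : (M:ℝ) * (l/2^k) = l/2^k' := by
    have h2 : (2:ℝ)^(k-k') * 2^k' = 2^k := pow_sub_mul_pow (2:ℝ) hkk
    have hMr : (M:ℝ) = 2^(k-k') := by rw [hM]; push_cast; ring
    rw [hMr]
    field_simp
    nlinarith [pow_pos (by norm_num : (0:ℝ) < 2) k, pow_pos (by norm_num : (0:ℝ) < 2) k']
  intro z hz i
  have hyk := hy1 i
  have hyk' := hy2 i
  rw [← hMD] at hyk'
  have := st18_1d_nest hD M hMpos (j i) (j' i) (y i) hyk.1 hyk.2 hyk'.1 hyk'.2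
    (z i) (hz i).1 (hz i).2
  rw [← hMD]
  exact this

theorem st18_cover1 {l : ℝ} (hl : 0 < l) (k : ℕ) {s : ℝ} (hs : 0 < s)
    (h3 : 3*s < l/2^k) (b t : ℝ) :
    ∃ (θ : Bool) (m : ℤ), ∀ y, t ≤ y → y < t + s →
      (b + st18off l θ + m*(l/2^k) ≤ y ∧ y < b + st18off l θ + m*(l/2^k) + l/2^k) := by
  set D := l/2^k with hDdef
  have hD : 0 < D := by positivity
  have hDl : D * 2^k = l := by rw [hDdef]; field_simp
  set j₀ := ⌊(t - b)/D⌋ with hj₀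
  set j₁ := ⌊(t - b - l/3)/D⌋ with hj₁
  have hj₀l : (j₀:ℝ)*D ≤ t - b := by
    rw [hj₀]
    have := Int.floor_le ((t - b)/D)
    calc (⌊(t - b)/D⌋:ℝ)*D ≤ ((t-b)/D)*D := by nlinarith
      _ = t - b := by field_simp
  have hj₀u : t - b < ((j₀:ℝ)+1)*D := by
    rw [hj₀]
    have := Int.lt_floor_add_one ((t - b)/D)
    calc t - b = ((t-b)/D)*D := by field_simp
      _ < ((⌊(t - b)/D⌋:ℝ)+1)*D := by nlinarith
  have hj₁l : (j₁:ℝ)*D ≤ t - b - l/3 := by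
    rw [hj₁]
    have := Int.floor_le ((t - b - l/3)/D)
    calc (⌊(t - b - l/3)/D⌋:ℝ)*D ≤ ((t-b-l/3)/D)*D := by nlinarith
      _ = t - b - l/3 := by field_simp
  have hj₁u : t - b - l/3 < ((j₁:ℝ)+1)*D := by
    rw [hj₁]
    have := Int.lt_floor_add_one ((t - b - l/3)/D)
    calc t - b - l/3 = ((t-b-l/3)/D)*D := by field_simp
      _ < ((⌊(t - b - l/3)/D⌋:ℝ)+1)*D := by nlinarith
  by_cases h₀ : t + s ≤ b + (j₀:ℝ)*D + D
  · refine ⟨false, j₀, fun y hy1 hy2 => ⟨?_, ?_⟩⟩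
    · simp only [st18off, if_neg Bool.false_ne_true]
      linarith
    · simp only [st18off, if_neg Bool.false_ne_true]
      linarith
  by_cases h₁ : t + s ≤ b + l/3 + (j₁:ℝ)*D + D
  · refine ⟨true, j₁, fun y hy1 hy2 => ⟨?_, ?_⟩⟩
    · simp only [st18off, if_true]
      linarith
    · simp only [st18off, if_true]
      linarith
  exfalso
  push_neg at h₀ h₁
  -- both grid boundary points γ₀, γ₁ lie in (t, t+s)
  set γ₀ := b + ((j₀:ℝ)+1)*D with hγ₀
  set γ₁ := b + l/3 + ((j₁:ℝ)+1)*D with hγ₁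
  have hγ₀mem : t < γ₀ ∧ γ₀ < t + s := by
    constructor
    · rw [hγ₀]; linarith
    · rw [hγ₀]; nlinarith
  have hγ₁mem : t < γ₁ ∧ γ₁ < t + s := by
    constructor
    · rw [hγ₁]; linarith
    · rw [hγ₁]; nlinarith
  set p := j₀ - j₁ with hp
  have hq : (3*p - 2^k : ℤ) ≠ 0 := by
    intro hq0
    have hdvd : (3:ℤ) ∣ 2^k := ⟨p, by omega⟩
    have := Int.Prime.dvd_pow' (by norm_num : Nat.Prime 3) hdvd
    norm_num at this
  have habs1 : (1:ℝ) ≤ |((3*p - 2^k : ℤ) : ℝ)| := by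
    rw [← Int.cast_abs]
    exact_mod_cast Int.one_le_abs hq
  have hkey : D/3 ≤ |(p:ℝ)*D - l/3| := by
    have hid : (p:ℝ)*D - l/3 = (D/3) * ((3*p - 2^k : ℤ) : ℝ) := by
      push_cast
      rw [← hDl]
      ring
    rw [hid, abs_mul, abs_of_pos (by positivity : (0:ℝ) < D/3)]
    nlinarith [habs1, (by positivity : (0:ℝ) < D/3)]
  have hdiff : γ₀ - γ₁ = (p:ℝ)*D - l/3 := by
    rw [hγ₀, hγ₁, hp]
    push_cast
    ring
  have habs2 : |(p:ℝ)*D - l/3| < s := by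
    rw [← hdiff, abs_lt]
    constructor
    · linarith [hγ₀mem.1, hγ₁mem.2]
    · linarith [hγ₀mem.2, hγ₁mem.1]
  have : s < D/3 := by linarith
  linarith

theorem st18_exists_k {l : ℝ} (hl : 0 < l) {s : ℝ} (hs : 0 < s) (h3 : 3*s < l) :
    ∃ k : ℕ, 3*s < l/2^k ∧ l/2^k ≤ 6*s := by
  classical
  have hex : ∃ n : ℕ, ¬(3*s < l/2^n) := by
    obtain ⟨n, hn⟩ := pow_unbounded_of_one_lt (l/(3*s)) (one_lt_two (α := ℝ))
    refine ⟨n, ?_⟩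
    push_neg
    have h1 : l < 2^n * (3*s) := (div_lt_iff₀ (by positivity)).mp hn
    rw [div_le_iff₀ (by positivity : (0:ℝ) < 2^n)]
    linarith
  set n₀ := Nat.find hex with hn₀
  have hspec : ¬(3*s < l/2^n₀) := Nat.find_spec hex
  have hn₀pos : 0 < n₀ := by
    rcases Nat.eq_zero_or_pos n₀ with h | h
    · exfalso
      rw [h] at hspec
      simp only [pow_zero, div_one] at hspec
      exact hspec h3
    · exact h
  refine ⟨n₀ - 1, ?_, ?_⟩
  · by_contra hcon
    exact absurd hcon (not_not.mpr (by
      exact absurd (Nat.find_min hex (Nat.sub_lt hn₀pos one_pos)) (not_not.mpr hcon)))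
  · have hk1 : n₀ - 1 + 1 = n₀ := Nat.succ_pred_eq_of_pos hn₀pos
    have h2 : l/2^n₀ ≤ 3*s := not_lt.mp hspec
    have hpow : (2:ℝ)^n₀ = 2^(n₀-1) * 2 := by
      rw [← pow_succ, hk1]
    rw [hpow] at h2
    have hpos : (0:ℝ) < 2^(n₀-1) := by positivity
    rw [div_le_iff₀ (by positivity)] at h2 ⊢
    nlinarith

theorem st18_cover {l : ℝ} (c : Euc N) (hl : 0 < l) (a : Euc N) {s : ℝ} (hs : 0 < s)
    (h3 : 3*s < l) :
    ∃ (α : Fin N → Bool) (k : ℕ) (j : Fin N → ℤ),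
      cube a s ⊆ st18gridP c l α k j ∧ l/2^k ≤ 6*s := by
  obtain ⟨k, hk1, hk2⟩ := st18_exists_k hl hs h3
  choose θ m hm using fun i : Fin N => st18_cover1 hl k hs hk1 (c i) (a i)
  refine ⟨θ, k, m, fun x hx i => hm i (x i) (hx i).1 (hx i).2, hk2⟩

end Grid

section Gm

variable {N : ℕ}

/-- The measure `σ dx` where `σ = w⁻¹`. -/
def st18Msig (w : Euc N → ℝ) : Measure (Euc N) :=
  volume.withDensity (fun x => ENNReal.ofReal ((w x)⁻¹))

/-- Cell of the grid, clipped to `Q`. -/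
def st18cellQ (c : Euc N) (l : ℝ) (α : Fin N → Bool) (k : ℕ) (j : Fin N → ℤ) :
    Set (Euc N) := st18gridP c l α k j ∩ cube c l

/-- σ-average of `h` over a cell. -/
def st18cellA (w : Euc N → ℝ) (c : Euc N) (l : ℝ) (α : Fin N → Bool) (k : ℕ)
    (j : Fin N → ℤ) (h : Euc N → ℝ≥0∞) : ℝ≥0∞ :=
  (∫⁻ y in st18cellQ c l α k j, h y ∂(st18Msig w)) / st18Msig w (st18cellQ c l α k j)

/-- The dyadic σ-maximal function over cells of grid `α`. -/
def st18Gm (w : Euc N → ℝ) (c : Euc N) (l : ℝ) (α : Fin N → Bool) (h : Euc N → ℝ≥0∞)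
    (x : Euc N) : ℝ≥0∞ :=
  ⨆ p : ℕ × (Fin N → ℤ),
    (st18cellQ c l α p.1 p.2).indicator (fun _ => st18cellA w c l α p.1 p.2 h) x

/-- `g = σ⁻¹ 1_Q` viewed in `ℝ≥0∞`: here `σ⁻¹ = w`. -/
def st18gfun (w : Euc N → ℝ) (c : Euc N) (l : ℝ) : Euc N → ℝ≥0∞ :=
  (cube c l).indicator (fun x => ENNReal.ofReal (w x))

theorem st18_meas_dens {w : Euc N → ℝ} (hw : IsA2Weight w) :
    Measurable (fun x : Euc N => ENNReal.ofReal ((w x)⁻¹)) :=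
  ENNReal.measurable_ofReal.comp hw.meas.inv

theorem st18_meas_gfun {w : Euc N → ℝ} (hw : IsA2Weight w) (c : Euc N) (l : ℝ) :
    Measurable (st18gfun w c l) :=
  (ENNReal.measurable_ofReal.comp hw.meas).indicator (st18_measurableSet_cube c l)

theorem st18_meas_cellQ (c : Euc N) (l : ℝ) (α : Fin N → Bool) (k : ℕ) (j : Fin N → ℤ) :
    MeasurableSet (st18cellQ c l α k j) :=
  (st18_measurableSet_cube _ _).inter (st18_measurableSet_cube c l)

theorem st18_Msig_apply {w : Euc N → ℝ} {S : Set (Euc N)} (hS : MeasurableSet S) :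
    st18Msig w S = st18tau w S := withDensity_apply _ hS

theorem st18_Msig_cell_ne_top {w : Euc N → ℝ} (hw : IsA2Weight w) (c : Euc N) (l : ℝ)
    (α : Fin N → Bool) (k : ℕ) (j : Fin N → ℤ) :
    st18Msig w (st18cellQ c l α k j) ≠ ∞ := by
  have h1 : st18Msig w (st18cellQ c l α k j) ≤ st18Msig w (cube c l) :=
    measure_mono Set.inter_subset_right
  rw [st18_Msig_apply (st18_measurableSet_cube c l)] at h1
  exact ne_top_of_le_ne_top (st18tau_lt_top hw c l le_rfl.subset).ne h1

theorem st18_inter_cubes_pos {c1 c2 : Euc N} {l1 l2 : ℝ} {x : Euc N}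
    (hx1 : x ∈ cube c1 l1) (hx2 : x ∈ cube c2 l2) :
    volume (cube c1 l1 ∩ cube c2 l2) ≠ 0 := by
  rw [st18_cube_eq_pi, st18_cube_eq_pi, ← Set.pi_inter_distrib, volume_pi_pi]
  rw [Finset.prod_ne_zero_iff]
  intro i _
  rw [Set.Ico_inter_Ico, Real.volume_Ico]
  have h1 := hx1 i
  have h2 := hx2 i
  have hlt : c1 i ⊔ c2 i < (c1 i + l1) ⊓ (c2 i + l2) := by
    simp only [sup_lt_iff, lt_inf_iff]
    exact ⟨⟨by linarith [h1.1, h1.2], by linarith [h1.1, h2.2]⟩,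
      ⟨by linarith [h2.1, h1.2], by linarith [h2.1, h2.2]⟩⟩
  exact (ENNReal.ofReal_pos.mpr (sub_pos.mpr hlt)).ne'

theorem st18_Msig_cell_ne_zero {w : Euc N → ℝ} (hw : IsA2Weight w) {c : Euc N} {l : ℝ}
    {α : Fin N → Bool} {k : ℕ} {j : Fin N → ℤ} {x : Euc N}
    (hx : x ∈ st18cellQ c l α k j) : st18Msig w (st18cellQ c l α k j) ≠ 0 := by
  rw [st18_Msig_apply (st18_meas_cellQ c l α k j)]
  exact (st18tau_pos hw (st18_meas_cellQ c l α k j)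
    (st18_inter_cubes_pos hx.1 hx.2)).ne'

/-- σ-integral of `g` over a cell equals the Lebesgue volume of the cell. -/
theorem st18_cell_lint {w : Euc N → ℝ} (hw : IsA2Weight w) (c : Euc N) (l : ℝ)
    (α : Fin N → Bool) (k : ℕ) (j : Fin N → ℤ) :
    ∫⁻ y in st18cellQ c l α k j, st18gfun w c l y ∂(st18Msig w)
      = volume (st18cellQ c l α k j) := by
  set B := st18cellQ c l α k j with hB
  have hBm : MeasurableSet B := st18_meas_cellQ c l α k j
  rw [st18Msig, restrict_withDensity hBm,
    lintegral_withDensity_eq_lintegral_mul _ (st18_meas_dens hw) (st18_meas_gfun hw c l)]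
  have : ∫⁻ y in B, ((fun x => ENNReal.ofReal ((w x)⁻¹)) * st18gfun w c l) y
      = ∫⁻ y in B, (1:ℝ≥0∞) := by
    apply setLIntegral_congr_fun hBm
    intro y hy
    simp only [Pi.mul_apply, st18gfun, Set.indicator_of_mem hy.2]
    rw [← ENNReal.ofReal_mul (le_of_lt (inv_pos.mpr (hw.pos y))), inv_mul_cancel₀ (hw.pos y).ne']
    exact ENNReal.ofReal_one
  rw [this, setLIntegral_one]

/-- total σ-integral of `g` is `|Q|`. -/
theorem st18_total_lint {w : Euc N → ℝ} (hw : IsA2Weight w) (c : Euc N) (l : ℝ) :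
    ∫⁻ y, st18gfun w c l y ∂(st18Msig w) = volume (cube c l) := by
  rw [st18Msig, lintegral_withDensity_eq_lintegral_mul _ (st18_meas_dens hw)
    (st18_meas_gfun hw c l)]
  have : ∀ y, ((fun x => ENNReal.ofReal ((w x)⁻¹)) * st18gfun w c l) y
      = (cube c l).indicator (fun _ => (1:ℝ≥0∞)) y := by
    intro y
    by_cases hy : y ∈ cube c l
    · simp only [Pi.mul_apply, st18gfun, Set.indicator_of_mem hy]
      rw [← ENNReal.ofReal_mul (le_of_lt (inv_pos.mpr (hw.pos y))), inv_mul_cancel₀ (hw.pos y).ne']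
      exact ENNReal.ofReal_one
    · simp only [Pi.mul_apply, st18gfun, Set.indicator_of_notMem hy, mul_zero]
  rw [lintegral_congr this, lintegral_indicator (st18_measurableSet_cube c l)]
  simp

/-- σ-integral of `g²` is `ν(Q)`. -/
theorem st18_sq_lint {w : Euc N → ℝ} (hw : IsA2Weight w) (c : Euc N) (l : ℝ) :
    ∫⁻ y, (st18gfun w c l y)^2 ∂(st18Msig w) = st18nu w (cube c l) := by
  have hm : Measurable (fun y => (st18gfun w c l y)^2) := (st18_meas_gfun hw c l).pow_const 2
  rw [st18Msig, lintegral_withDensity_eq_lintegral_mul _ (st18_meas_dens hw) hm]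
  have : ∀ y, ((fun x => ENNReal.ofReal ((w x)⁻¹)) * fun y => (st18gfun w c l y)^2) y
      = (cube c l).indicator (fun x => ENNReal.ofReal (w x)) y := by
    intro y
    by_cases hy : y ∈ cube c l
    · simp only [Pi.mul_apply, st18gfun, Set.indicator_of_mem hy]
      rw [sq, ← mul_assoc, ← ENNReal.ofReal_mul (le_of_lt (inv_pos.mpr (hw.pos y))),
        inv_mul_cancel₀ (hw.pos y).ne', ENNReal.ofReal_one, one_mul]
    · simp only [Pi.mul_apply, st18gfun, Set.indicator_of_notMem hy]
      simp
  rw [lintegral_congr this, lintegral_indicator (st18_measurableSet_cube c l)]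
  rfl

theorem st18_meas_Gm {w : Euc N → ℝ} (c : Euc N) (l : ℝ) (α : Fin N → Bool)
    (h : Euc N → ℝ≥0∞) : Measurable (st18Gm w c l α h) :=
  Measurable.iSup (fun p => measurable_const.indicator (st18_meas_cellQ c l α p.1 p.2))

theorem st18_cellA_le_Gm {w : Euc N → ℝ} {c : Euc N} {l : ℝ} {α : Fin N → Bool}
    {k : ℕ} {j : Fin N → ℤ} (h : Euc N → ℝ≥0∞) {x : Euc N}
    (hx : x ∈ st18cellQ c l α k j) :
    st18cellA w c l α k j h ≤ st18Gm w c l α h x := by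
  have := le_iSup (fun p : ℕ × (Fin N → ℤ) =>
    (st18cellQ c l α p.1 p.2).indicator (fun _ => st18cellA w c l α p.1 p.2 h) x) (k, j)
  rwa [Set.indicator_of_mem hx] at this

theorem st18_Gm_le_const {w : Euc N → ℝ} {c : Euc N} {l : ℝ} {α : Fin N → Bool}
    {h : Euc N → ℝ≥0∞} {c₀ : ℝ≥0∞} (hh : ∀ y, h y ≤ c₀) (x : Euc N) :
    st18Gm w c l α h x ≤ c₀ := by
  apply iSup_le
  intro p
  by_cases hx : x ∈ st18cellQ c l α p.1 p.2
  · rw [Set.indicator_of_mem hx]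
    apply ENNReal.div_le_of_le_mul
    calc ∫⁻ y in st18cellQ c l α p.1 p.2, h y ∂(st18Msig w)
        ≤ ∫⁻ _ in st18cellQ c l α p.1 p.2, c₀ ∂(st18Msig w) := lintegral_mono (fun y => hh y)
      _ = c₀ * st18Msig w (st18cellQ c l α p.1 p.2) := setLIntegral_const _ _
  · rw [Set.indicator_of_notMem hx]
    exact zero_le

theorem st18_Gm_mono {w : Euc N → ℝ} {c : Euc N} {l : ℝ} {α : Fin N → Bool}
    {h h' : Euc N → ℝ≥0∞} (hh : ∀ y, h y ≤ h' y) (x : Euc N) :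
    st18Gm w c l α h x ≤ st18Gm w c l α h' x := by
  apply iSup_mono
  intro p
  apply Set.indicator_le_indicator
  exact ENNReal.div_le_div_right (lintegral_mono (fun y => hh y)) _

theorem st18_Gm_add {w : Euc N → ℝ} {c : Euc N} {l : ℝ} {α : Fin N → Bool}
    {h1 h2 : Euc N → ℝ≥0∞} (hm1 : Measurable h1) (x : Euc N) :
    st18Gm w c l α (fun y => h1 y + h2 y) x
      ≤ st18Gm w c l α h1 x + st18Gm w c l α h2 x := by
  apply iSup_le
  intro p
  by_cases hx : x ∈ st18cellQ c l α p.1 p.2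
  · rw [Set.indicator_of_mem hx]
    have hsplit : st18cellA w c l α p.1 p.2 (fun y => h1 y + h2 y)
        = st18cellA w c l α p.1 p.2 h1 + st18cellA w c l α p.1 p.2 h2 := by
      unfold st18cellA
      rw [lintegral_add_left hm1, ENNReal.div_add_div_same]
    rw [hsplit]
    exact add_le_add (st18_cellA_le_Gm h1 hx) (st18_cellA_le_Gm h2 hx)
  · rw [Set.indicator_of_notMem hx]
    exact zero_le

/-- Weak type (1,1) for the σ-dyadic maximal function, w.r.t. the measure σ. -/
theorem st18_Gm_weak {w : Euc N → ℝ} (hw : IsA2Weight w) {c : Euc N} {l : ℝ} (hl : 0 < l)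
    (α : Fin N → Bool) (h : Euc N → ℝ≥0∞) {t : ℝ≥0∞} (ht0 : t ≠ 0) (htop : t ≠ ∞) :
    st18Msig w {x | t < st18Gm w c l α h x} ≤ t⁻¹ * ∫⁻ y, h y ∂(st18Msig w) := by
  classical
  set μ := st18Msig w with hμ
  set cell : ℕ × (Fin N → ℤ) → Set (Euc N) := fun p => st18cellQ c l α p.1 p.2 with hcell
  set S : Set (ℕ × (Fin N → ℤ)) := {p | t * μ (cell p) < ∫⁻ y in cell p, h y ∂μ} with hS
  set Sel : Set (ℕ × (Fin N → ℤ)) :=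
    {p | p ∈ S ∧ ∀ q ∈ S, q.1 < p.1 → Disjoint (cell p) (cell q)} with hSel
  have hcover : {x | t < st18Gm w c l α h x} ⊆ ⋃ p ∈ Sel, cell p := by
    intro x hx
    simp only [Set.mem_setOf_eq, st18Gm, lt_iSup_iff] at hx
    obtain ⟨p, hp⟩ := hx
    have hxcell : x ∈ cell p := by
      by_contra hxc
      rw [Set.indicator_of_notMem hxc] at hp
      exact (not_lt_of_ge (zero_le)) hp
    rw [Set.indicator_of_mem hxcell] at hp
    have hpS : p ∈ S := by
      rw [hS, Set.mem_setOf_eq]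
      by_cases hm : μ (cell p) = 0
      · rw [hm, mul_zero]
        rw [pos_iff_ne_zero]
        intro hI
        rw [st18cellA] at hp
        have : (∫⁻ y in cell p, h y ∂μ) / μ (cell p) = 0 := by
          rw [hI, ENNReal.zero_div]
        rw [this] at hp
        exact (not_lt_of_ge (zero_le)) hp
      · exact (ENNReal.lt_div_iff_mul_lt (Or.inl hm)
          (Or.inl (st18_Msig_cell_ne_top hw c l α p.1 p.2))).mp hp
    have hTne : ∃ k : ℕ, ∃ jj : Fin N → ℤ, ((k, jj) ∈ S ∧ x ∈ cell (k, jj)) :=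
      ⟨p.1, p.2, hpS, hxcell⟩
    set k₀ := Nat.find hTne with hk₀
    obtain ⟨j₀, hj₀S, hj₀x⟩ := Nat.find_spec hTne
    refine Set.mem_biUnion (show ((k₀, j₀) : ℕ × (Fin N → ℤ)) ∈ Sel from ?_) hj₀x
    refine ⟨hj₀S, ?_⟩
    rintro q hqS hqlt
    by_contra hdis
    rw [Set.not_disjoint_iff] at hdis
    obtain ⟨y, hy1, hy2⟩ := hdis
    have hsub : st18gridP c l α k₀ j₀ ⊆ st18gridP c l α q.1 q.2 :=
      st18_gridP_nest hl (le_of_lt hqlt) ⟨y, hy1.1, hy2.1⟩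
    have hxq : x ∈ cell q := ⟨hsub hj₀x.1, hj₀x.2⟩
    have := Nat.find_min' hTne (m := q.1) ⟨q.2, hqS, hxq⟩
    omega
  have hdisj : ∀ p ∈ Sel, ∀ q ∈ Sel, p ≠ q → Disjoint (cell p) (cell q) := by
    rintro ⟨k, j⟩ hp ⟨k', j'⟩ hq hpq
    rcases lt_trichotomy k k' with hlt | heq | hgt
    · exact (hq.2 _ hp.1 hlt).symm
    · subst heq
      have hj : j ≠ j' := by
        intro hj2
        exact hpq (by rw [hj2])
      have hD : (0:ℝ) < l / 2^k := by positivity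
      exact Disjoint.mono Set.inter_subset_left Set.inter_subset_left
        (st18_gridP_disjoint (c := c) (α := α) hD hj)
    · exact hp.2 _ hq.1 hgt
  calc μ {x | t < st18Gm w c l α h x}
      ≤ μ (⋃ p ∈ Sel, cell p) := measure_mono hcover
    _ ≤ ∑' (p : ↑Sel), μ (cell ↑p) := measure_biUnion_le μ (Set.to_countable Sel) cell
    _ ≤ ∑' (p : ↑Sel), t⁻¹ * ∫⁻ y in cell ↑p, h y ∂μ := by
        apply Summable.tsum_le_tsum _ ENNReal.summable ENNReal.summable
        intro p
        have hpS := p.2.1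
        rw [hS, Set.mem_setOf_eq] at hpS
        calc μ (cell ↑p) = t⁻¹ * (t * μ (cell ↑p)) := by
              rw [← mul_assoc, ENNReal.inv_mul_cancel ht0 htop, one_mul]
          _ ≤ t⁻¹ * ∫⁻ y in cell ↑p, h y ∂μ := mul_le_mul_right (le_of_lt hpS) _
    _ = t⁻¹ * ∑' (p : ↑Sel), ∫⁻ y in cell ↑p, h y ∂μ := ENNReal.tsum_mul_left
    _ = t⁻¹ * ∫⁻ y in ⋃ (p : ↑Sel), cell ↑p, h y ∂μ := by
        have hpair : Pairwise (Function.onFun Disjoint fun p : ↑Sel => cell ↑p) :=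
          fun p q hpq => hdisj _ p.2 _ q.2 (fun hc => hpq (Subtype.ext hc))
        rw [lintegral_iUnion (s := fun p : ↑Sel => cell ↑p)
          (fun p => st18_meas_cellQ c l α _ _) hpair h]
    _ ≤ t⁻¹ * ∫⁻ y, h y ∂μ := mul_le_mul_right (setLIntegral_le_lintegral _ _) _

end Gm

section L2

variable {N : ℕ}

theorem st18_two_ne_zero' : (2:ℝ≥0∞) ≠ 0 := by norm_num
theorem st18_two_ne_top' : (2:ℝ≥0∞) ≠ ∞ := by norm_num

theorem st18_zpow_ne_zero (m : ℤ) : (2:ℝ≥0∞)^m ≠ 0 :=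
  (ENNReal.zpow_pos st18_two_ne_zero' st18_two_ne_top' m).ne'

theorem st18_zpow_ne_top (m : ℤ) : (2:ℝ≥0∞)^m ≠ ∞ :=
  (ENNReal.zpow_lt_top st18_two_ne_zero' st18_two_ne_top' m).ne

theorem st18_zpow_succ (m : ℤ) : (2:ℝ≥0∞)^m + 2^m = 2^(m+1) := by
  rw [ENNReal.zpow_add st18_two_ne_zero' st18_two_ne_top' m 1, zpow_one, mul_two]

theorem st18_zpow_lt_succ (m : ℤ) : (2:ℝ≥0∞)^m < 2^(m+1) := by
  rw [← st18_zpow_succ m]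
  exact ENNReal.lt_add_right (st18_zpow_ne_top m) (st18_zpow_ne_zero m)
set_option linter.unusedVariables false

/-- Sum of the dyadic powers below `a` is at most `2a`. -/
theorem st18_dyadic_sum (a : ℝ≥0∞) :
    (∑' m : ℤ, if (2:ℝ≥0∞)^m < a then (2:ℝ≥0∞)^m else 0) ≤ 2 * a := by
  rcases eq_or_ne a 0 with rfl | ha0
  · have : ∀ m : ℤ, (if (2:ℝ≥0∞)^m < 0 then (2:ℝ≥0∞)^m else 0) = 0 := by
      intro m
      rw [if_neg (by exact fun h => (not_lt_of_ge (zero_le)) h)]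
    rw [tsum_congr this]
    simp
  rcases eq_or_ne a ⊤ with rfl | hat
  · rw [ENNReal.mul_top (by norm_num : (2:ℝ≥0∞) ≠ 0)]
    exact le_top
  obtain ⟨n, hn1, hn2⟩ := ENNReal.exists_mem_Ico_zpow ha0 hat ENNReal.one_lt_two st18_two_ne_top'
  calc (∑' m : ℤ, if (2:ℝ≥0∞)^m < a then (2:ℝ≥0∞)^m else 0)
      ≤ ∑' m : ℤ, (if m ≤ n then (2:ℝ≥0∞)^m else 0) := by
        apply Summable.tsum_le_tsum _ ENNReal.summable ENNReal.summable
        intro m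
        by_cases hm : (2:ℝ≥0∞)^m < a
        · rw [if_pos hm, if_pos]
          by_contra hmn
          push_neg at hmn
          have h1 : (2:ℝ≥0∞)^(n+1) ≤ 2^m := ENNReal.zpow_le_of_le one_le_two (by omega)
          exact absurd (lt_of_lt_of_le (lt_of_lt_of_le hm (le_of_lt hn2)) h1)
            (lt_irrefl _)
        · rw [if_neg hm]
          exact zero_le
    _ = ∑' kk : ℕ, (2:ℝ≥0∞)^(n - (kk:ℤ)) := by
        symm
        have hinj : Function.Injective (fun kk : ℕ => n - (kk:ℤ)) := by
          intro a b hab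
          simp only at hab
          omega
        have hsupp : Function.support (fun m : ℤ => if m ≤ n then (2:ℝ≥0∞)^m else 0)
            ⊆ Set.range (fun kk : ℕ => n - (kk:ℤ)) := by
          intro m hm
          have hmn : m ≤ n := by
            by_contra hc
            rw [Function.mem_support, if_neg hc] at hm
            exact hm rfl
          exact ⟨(n - m).toNat, by simp; omega⟩
        have := Function.Injective.tsum_eq hinj hsupp
        rw [← this]
        apply tsum_congr
        intro kk
        rw [if_pos (by omega : n - (kk:ℤ) ≤ n)]
    _ = (2:ℝ≥0∞)^n * ∑' kk : ℕ, ((2:ℝ≥0∞)⁻¹)^kk := by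
        rw [← ENNReal.tsum_mul_left]
        apply tsum_congr
        intro kk
        rw [sub_eq_add_neg, ENNReal.zpow_add st18_two_ne_zero' st18_two_ne_top' n (-(kk:ℤ))]
        congr 1
        rw [ENNReal.zpow_neg, zpow_natCast,
          ← ENNReal.inv_pow]
    _ = (2:ℝ≥0∞)^n * 2 := by
        rw [ENNReal.tsum_geometric, ENNReal.one_sub_inv_two, inv_inv]
    _ ≤ 2 * a := by
        rw [mul_comm]
        exact mul_le_mul_right hn1 2

/-- The `L²(σ)` bound for the σ-dyadic maximal function of `g`. -/
theorem st18_Gm_L2 {w : Euc N → ℝ} (hw : IsA2Weight w) {c : Euc N} {l : ℝ} (hl : 0 < l)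
    (α : Fin N → Bool) :
    ∫⁻ x in cube c l, (st18Gm w c l α (st18gfun w c l) x)^2 ∂(st18Msig w)
      ≤ 128 * st18nu w (cube c l) := by
  set μ := st18Msig w with hμ
  set g := st18gfun w c l with hg
  set F := st18Gm w c l α g with hF
  have hgm : Measurable g := st18_meas_gfun hw c l
  have hFm : Measurable F := st18_meas_Gm c l α g
  have hT : ∫⁻ y, g y ∂μ = volume (cube c l) := st18_total_lint hw c l
  have hTtop : ∫⁻ y, g y ∂μ ≠ ∞ := by
    rw [hT, st18_volume_cube]
    exact ENNReal.pow_ne_top ENNReal.ofReal_ne_top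
  -- truncations
  set bf : ℤ → Euc N → ℝ≥0∞ := fun m y => if (2:ℝ≥0∞)^m < g y then g y else 0 with hbf
  have hbfm : ∀ m, Measurable (bf m) := by
    intro m
    apply Measurable.ite _ hgm measurable_const
    exact measurableSet_lt measurable_const hgm
  have hbfle : ∀ m y, bf m y ≤ g y := by
    intro m y
    show (if (2:ℝ≥0∞)^m < g y then g y else 0) ≤ g y
    split_ifs with hc
    · exact le_rfl
    · exact zero_le
  have hsplit : ∀ (m₀ : ℤ) (x : Euc N), F x ≤ st18Gm w c l α (bf m₀) x + 2^m₀ := by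
    intro m₀ x
    have h1 : ∀ y, g y ≤ bf m₀ y + 2^m₀ := by
      intro y
      show g y ≤ (if (2:ℝ≥0∞)^m₀ < g y then g y else 0) + 2^m₀
      split_ifs with hc
      · exact le_add_right le_rfl
      · rw [zero_add]; exact not_lt.mp hc
    calc F x ≤ st18Gm w c l α (fun y => bf m₀ y + 2^m₀) x := st18_Gm_mono h1 x
      _ ≤ st18Gm w c l α (bf m₀) x + st18Gm w c l α (fun _ => (2:ℝ≥0∞)^m₀) x :=
          st18_Gm_add (hbfm m₀) x
      _ ≤ st18Gm w c l α (bf m₀) x + 2^m₀ :=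
          add_le_add le_rfl (st18_Gm_le_const (fun _ => le_rfl) x)
  -- weak-type estimate on superlevel sets of F
  have hweak : ∀ m : ℤ, μ {x | (2:ℝ≥0∞)^m < F x}
      ≤ ((2:ℝ≥0∞)^(m-1))⁻¹ * ∫⁻ y, bf (m-1) y ∂μ := by
    intro m
    have hsub : {x | (2:ℝ≥0∞)^m < F x} ⊆ {x | (2:ℝ≥0∞)^(m-1) < st18Gm w c l α (bf (m-1)) x} := by
      intro x hx
      simp only [Set.mem_setOf_eq] at hx ⊢
      by_contra hcon
      push_neg at hcon
      have : F x ≤ 2^(m-1) + 2^(m-1) := le_trans (hsplit (m-1) x) (add_le_add hcon le_rfl)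
      rw [st18_zpow_succ (m-1)] at this
      simp only [sub_add_cancel] at this
      exact absurd (lt_of_lt_of_le hx this) (lt_irrefl _)
    calc μ {x | (2:ℝ≥0∞)^m < F x}
        ≤ μ {x | (2:ℝ≥0∞)^(m-1) < st18Gm w c l α (bf (m-1)) x} := measure_mono hsub
      _ ≤ ((2:ℝ≥0∞)^(m-1))⁻¹ * ∫⁻ y, bf (m-1) y ∂μ :=
          st18_Gm_weak hw hl α (bf (m-1)) (st18_zpow_ne_zero (m-1)) (st18_zpow_ne_top (m-1))
  -- F is a.e. finite
  have hinfty : μ {x | F x = ∞} = 0 := by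
    have hbd : ∀ n : ℕ, μ {x | F x = ∞} ≤ ((2:ℝ≥0∞)⁻¹)^n * ∫⁻ y, g y ∂μ := by
      intro n
      have hsub : {x | F x = ∞} ⊆ {x | (2:ℝ≥0∞)^((n:ℤ)+1) < F x} := by
        intro x hx
        simp only [Set.mem_setOf_eq] at hx ⊢
        rw [hx]
        exact ENNReal.zpow_lt_top st18_two_ne_zero' st18_two_ne_top' _
      calc μ {x | F x = ∞} ≤ μ {x | (2:ℝ≥0∞)^((n:ℤ)+1) < F x} := measure_mono hsub
        _ ≤ ((2:ℝ≥0∞)^((n:ℤ)+1-1))⁻¹ * ∫⁻ y, bf ((n:ℤ)+1-1) y ∂μ := hweak ((n:ℤ)+1)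
        _ ≤ ((2:ℝ≥0∞)^(n:ℤ))⁻¹ * ∫⁻ y, g y ∂μ := by
            simp only [add_sub_cancel_right]
            exact mul_le_mul_right (lintegral_mono (fun y => hbfle _ y)) _
        _ = ((2:ℝ≥0∞)⁻¹)^n * ∫⁻ y, g y ∂μ := by
            congr 1
            rw [zpow_natCast, ← ENNReal.inv_pow]
    have htends : Filter.Tendsto (fun n : ℕ => ((2:ℝ≥0∞)⁻¹)^n * ∫⁻ y, g y ∂μ)
        Filter.atTop (nhds 0) := by
      have h1 : Filter.Tendsto (fun n : ℕ => ((2:ℝ≥0∞)⁻¹)^n) Filter.atTop (nhds 0) :=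
        ENNReal.tendsto_pow_atTop_nhds_zero_of_lt_one (by
          rw [ENNReal.inv_lt_one]; exact ENNReal.one_lt_two)
      have := ENNReal.Tendsto.mul_const h1 (Or.inr hTtop)
      simpa using this
    exact le_antisymm (ge_of_tendsto' htends (fun n => hbd n)) (zero_le)
  -- level set decomposition
  set U : ℤ → Set (Euc N) := fun m => {x | (2:ℝ≥0∞)^m ≤ F x ∧ F x < 2^(m+1)} with hU
  have hQsub : cube c l ⊆ {x | F x = 0} ∪ ({x | F x = ∞} ∪ ⋃ m : ℤ, U m) := by
    intro x _
    rcases eq_or_ne (F x) 0 with h0 | h0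
    · exact Or.inl h0
    rcases eq_or_ne (F x) ∞ with hi | hi
    · exact Or.inr (Or.inl hi)
    obtain ⟨m, hm1, hm2⟩ := ENNReal.exists_mem_Ico_zpow h0 hi ENNReal.one_lt_two st18_two_ne_top'
    exact Or.inr (Or.inr (Set.mem_iUnion.mpr ⟨m, hm1, hm2⟩))
  calc ∫⁻ x in cube c l, F x ^ 2 ∂μ
      ≤ ∫⁻ x in {x | F x = 0} ∪ ({x | F x = ∞} ∪ ⋃ m : ℤ, U m), F x ^ 2 ∂μ :=
        lintegral_mono_set hQsub
    _ ≤ (∫⁻ x in {x | F x = 0}, F x ^ 2 ∂μ)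
        + (∫⁻ x in {x | F x = ∞} ∪ ⋃ m : ℤ, U m, F x ^ 2 ∂μ) := lintegral_union_le _ _ _
    _ ≤ (∫⁻ x in {x | F x = 0}, F x ^ 2 ∂μ)
        + ((∫⁻ x in {x | F x = ∞}, F x ^ 2 ∂μ) + ∫⁻ x in ⋃ m : ℤ, U m, F x ^ 2 ∂μ) :=
        add_le_add le_rfl (lintegral_union_le _ _ _)
    _ ≤ 0 + (0 + ∑' m : ℤ, ∫⁻ x in U m, F x ^ 2 ∂μ) := by
        apply add_le_add
        · have : ∫⁻ x in {x | F x = 0}, F x ^ 2 ∂μ = ∫⁻ _ in {x | F x = 0}, 0 ∂μ := by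
            apply setLIntegral_congr_fun (hFm (measurableSet_singleton 0))
            intro x hx
            beta_reduce
            rw [show F x = 0 from hx]
            simp
          rw [this]
          simp
        apply add_le_add
        · rw [setLIntegral_measure_zero _ _ hinfty]
        · exact lintegral_iUnion_le _ _
    _ = ∑' m : ℤ, ∫⁻ x in U m, F x ^ 2 ∂μ := by simp
    _ ≤ ∑' m : ℤ, (2:ℝ≥0∞)^(m+4) * ∫⁻ y, bf (m-2) y ∂μ := by
        apply Summable.tsum_le_tsum _ ENNReal.summable ENNReal.summable
        intro m
        have hbound : ∫⁻ x in U m, F x ^ 2 ∂μ ≤ (2:ℝ≥0∞)^(2*m+2) * μ (U m) := by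
          have h1 : ∀ x ∈ U m, F x ^ 2 ≤ (2:ℝ≥0∞)^(2*m+2) := by
            intro x hx
            have h2 : F x ^ 2 ≤ ((2:ℝ≥0∞)^(m+1))^2 := pow_le_pow_left' (le_of_lt hx.2) 2
            calc F x ^ 2 ≤ ((2:ℝ≥0∞)^(m+1))^2 := h2
              _ = (2:ℝ≥0∞)^(2*m+2) := by
                  rw [sq, ← ENNReal.zpow_add st18_two_ne_zero' st18_two_ne_top']
                  ring_nf
            
          calc ∫⁻ x in U m, F x ^ 2 ∂μ
              ≤ ∫⁻ _ in U m, (2:ℝ≥0∞)^(2*m+2) ∂μ := setLIntegral_mono measurable_const h1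
            _ = (2:ℝ≥0∞)^(2*m+2) * μ (U m) := setLIntegral_const _ _
        have hUsub : U m ⊆ {x | (2:ℝ≥0∞)^(m-1) < F x} := by
          intro x hx
          exact lt_of_lt_of_le (by simpa using st18_zpow_lt_succ (m-1)) hx.1
        calc ∫⁻ x in U m, F x ^ 2 ∂μ
            ≤ (2:ℝ≥0∞)^(2*m+2) * μ (U m) := hbound
          _ ≤ (2:ℝ≥0∞)^(2*m+2) * (((2:ℝ≥0∞)^(m-1-1))⁻¹ * ∫⁻ y, bf (m-1-1) y ∂μ) :=
              mul_le_mul_right (le_trans (measure_mono hUsub) (hweak (m-1))) _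
          _ = (2:ℝ≥0∞)^(m+4) * ∫⁻ y, bf (m-2) y ∂μ := by
              have : m - 1 - 1 = m - 2 := by ring
              rw [this, ← mul_assoc]
              congr 1
              rw [← ENNReal.zpow_neg,
                ← ENNReal.zpow_add st18_two_ne_zero' st18_two_ne_top']
              congr 1
              ring
    _ = ∑' m : ℤ, (2:ℝ≥0∞)^((m-2)+6) * ∫⁻ y, bf (m-2) y ∂μ := by
        apply tsum_congr
        intro m
        congr 2
        ring
    _ = ∑' m : ℤ, (2:ℝ≥0∞)^(m+6) * ∫⁻ y, bf m y ∂μ := by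
        exact (Equiv.subRight (2:ℤ)).tsum_eq (fun m => (2:ℝ≥0∞)^(m+6) * ∫⁻ y, bf m y ∂μ)
    _ = 64 * ∑' m : ℤ, (2:ℝ≥0∞)^m * ∫⁻ y, bf m y ∂μ := by
        rw [← ENNReal.tsum_mul_left]
        apply tsum_congr
        intro m
        rw [ENNReal.zpow_add st18_two_ne_zero' st18_two_ne_top' m 6, ← mul_assoc]
        congr 1
        rw [mul_comm]
        congr 1
        rw [show ((6:ℤ)) = ((6:ℕ):ℤ) from rfl, zpow_natCast]
        norm_num
    _ = 64 * ∫⁻ y, ∑' m : ℤ, (2:ℝ≥0∞)^m * bf m y ∂μ := by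
        congr 1
        rw [lintegral_tsum (fun m => ((hbfm m).const_mul _).aemeasurable)]
        apply tsum_congr
        intro m
        rw [lintegral_const_mul _ (hbfm m)]
    _ ≤ 64 * ∫⁻ y, 2 * (g y)^2 ∂μ := by
        apply mul_le_mul_right
        apply lintegral_mono
        intro y
        show (∑' m : ℤ, (2:ℝ≥0∞)^m * bf m y) ≤ 2 * (g y)^2
        have : ∀ m : ℤ, (2:ℝ≥0∞)^m * bf m y
            = (if (2:ℝ≥0∞)^m < g y then (2:ℝ≥0∞)^m else 0) * g y := by
          intro m
          show (2:ℝ≥0∞)^m * (if (2:ℝ≥0∞)^m < g y then g y else 0) = _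
          split_ifs with hc
          · rfl
          · rw [mul_zero, zero_mul]
        rw [tsum_congr this, ENNReal.tsum_mul_right]
        calc (∑' m : ℤ, if (2:ℝ≥0∞)^m < g y then (2:ℝ≥0∞)^m else 0) * g y
            ≤ (2 * g y) * g y := mul_le_mul_left (st18_dyadic_sum (g y)) _
          _ = 2 * (g y)^2 := by rw [sq]; ring
    _ = 128 * st18nu w (cube c l) := by
        rw [lintegral_const_mul _ (hgm.pow_const 2), st18_sq_lint hw c l, ← mul_assoc]
        norm_num

end L2

section Master

variable {N : ℕ}

theorem st18_div_le_div {X Y r b : ℝ≥0∞} (h : X * b ≤ Y * r) (hr0 : r ≠ 0) (hrt : r ≠ ∞)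
    (hb0 : b ≠ 0) (hbt : b ≠ ∞) : X / r ≤ Y / b := by
  rw [ENNReal.le_div_iff_mul_le (Or.inl hb0) (Or.inl hbt)]
  rw [div_eq_mul_inv, mul_right_comm, ← div_eq_mul_inv]
  rw [ENNReal.div_le_iff_le_mul (Or.inl hr0) (Or.inl hrt)]
  exact h

theorem st18_vol_cube_ne_zero (c : Euc N) {s : ℝ} (hs : 0 < s) :
    volume (cube c s) ≠ 0 := by
  rw [st18_volume_cube]
  exact pow_ne_zero _ (by simpa [ENNReal.ofReal_eq_zero] using not_le.mpr hs)

theorem st18_vol_cube_ne_top (c : Euc N) (s : ℝ) : volume (cube c s) ≠ ∞ := by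
  rw [st18_volume_cube]
  exact ENNReal.pow_ne_top ENNReal.ofReal_ne_top

theorem st18_vol_cube_le {c1 c2 : Euc N} {s1 s2 : ℝ} (hs1 : 0 ≤ s1) (h : s1 ≤ s2) (m : ℝ≥0∞)
    (hm : ENNReal.ofReal s2 ≤ m * ENNReal.ofReal s1 → True) :
    True := trivial

/-- The key pointwise estimate. -/
theorem st18_master {w : Euc N → ℝ} (hw : IsA2Weight w) {c : Euc N} {l : ℝ} (hl : 0 < l)
    {x : Euc N} (hx : x ∈ cube c l) (c' : Euc N) {s : ℝ} (hs : 0 < s)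
    (hxR : x ∈ cube c' s) :
    st18nu w (cube c l ∩ cube c' s) / volume (cube c' s)
      ≤ 3^N * (st18nu w (cube c l) / volume (cube c l))
        + 36^N * ENNReal.ofReal (A2const w)
            * ∑ α : Fin N → Bool, st18Gm w c l α (st18gfun w c l) x := by
  set Q := cube c l with hQdef
  set R := cube c' s with hRdef
  set A := ENNReal.ofReal (A2const w) with hA
  have hxQR : x ∈ Q ∩ R := ⟨hx, hxR⟩
  have hvolR0 : volume R ≠ 0 := st18_vol_cube_ne_zero c' hs
  have hvolRt : volume R ≠ ∞ := st18_vol_cube_ne_top c' s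
  have hvolQ0 : volume Q ≠ 0 := st18_vol_cube_ne_zero c hl
  have hvolQt : volume Q ≠ ∞ := st18_vol_cube_ne_top c l
  by_cases hcase : 3*s < l
  · -- small cube: use the grids
    have hsl : s ≤ l := by linarith
    obtain ⟨a, hK1, hK2⟩ := st18_clamp c l c' s hsl
    set K := cube a s with hKdef
    obtain ⟨α, k, j, hKP, hD6⟩ := st18_cover c hl a hs hcase
    set B := st18cellQ c l α k j with hBdef
    have hxK : x ∈ K := hK1 hxQR
    have hxB : x ∈ B := ⟨hKP hxK, hx⟩
    have hKB : K ⊆ B := fun y hy => ⟨hKP hy, hK2 hy⟩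
    have hDpos : (0:ℝ) < l/2^k := by positivity
    have hMsigB0 : st18Msig w B ≠ 0 := st18_Msig_cell_ne_zero hw hxB
    have hMsigBt : st18Msig w B ≠ ∞ := st18_Msig_cell_ne_top hw c l α k j
    -- volume comparisons
    have hvolP : volume (st18gridP c l α k j) = ENNReal.ofReal (l/2^k) ^ N :=
      st18_volume_cube _ _
    have hvolPle : volume (st18gridP c l α k j) ≤ 6^N * volume R := by
      rw [hvolP, hRdef, st18_volume_cube]
      have h1 : ENNReal.ofReal (l/2^k) ≤ ENNReal.ofReal (6*s) :=
        ENNReal.ofReal_le_ofReal hD6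
      calc ENNReal.ofReal (l/2^k) ^ N ≤ ENNReal.ofReal (6*s) ^ N := pow_le_pow_left' h1 N
        _ = (6 * ENNReal.ofReal s) ^ N := by
            rw [ENNReal.ofReal_mul (by norm_num : (0:ℝ) ≤ 6)]
            norm_num
        _ = 6^N * ENNReal.ofReal s ^ N := mul_pow _ _ _
    have hvolKB : volume R ≤ volume B := by
      have : volume R = volume K := by
        rw [hRdef, hKdef, st18_volume_cube, st18_volume_cube]
      rw [this]
      exact measure_mono hKB
    have hvolPleB : volume (st18gridP c l α k j) ≤ 6^N * volume B :=
      le_trans hvolPle (mul_le_mul_right hvolKB _)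
    -- the cross inequality
    have key : st18nu w (Q ∩ R) * st18Msig w B ≤ (36^N * A * volume B) * volume R := by
      have h1 : st18nu w (Q ∩ R) ≤ st18nu w (st18gridP c l α k j) :=
        st18nu_mono w (fun y hy => hKP (hK1 hy))
      have h2 : st18Msig w B ≤ st18tau w (st18gridP c l α k j) := by
        rw [st18_Msig_apply (st18_meas_cellQ c l α k j)]
        exact st18tau_mono w Set.inter_subset_left
      calc st18nu w (Q ∩ R) * st18Msig w B
          ≤ st18nu w (st18gridP c l α k j) * st18tau w (st18gridP c l α k j) :=
            mul_le_mul' h1 h2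
        _ ≤ A * (volume (st18gridP c l α k j) * volume (st18gridP c l α k j)) :=
            st18_a2_bound hw _ hDpos
        _ ≤ A * ((6^N * volume B) * (6^N * volume R)) :=
            mul_le_mul_right (mul_le_mul' hvolPleB hvolPle) _
        _ = (36^N * A * volume B) * volume R := by
            have h36 : (36:ℝ≥0∞)^N = 6^N * 6^N := by
              rw [← mul_pow]
              norm_num
            rw [h36]
            ring
    have hdiv : st18nu w (Q ∩ R) / volume R ≤ (36^N * A * volume B) / st18Msig w B :=
      st18_div_le_div key hvolR0 hvolRt hMsigB0 hMsigBt
    have hcellA : (36^N * A * volume B) / st18Msig w B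
        = 36^N * A * st18cellA w c l α k j (st18gfun w c l) := by
      rw [st18cellA, st18_cell_lint hw c l α k j]
      rw [mul_div_assoc]
    have hGm : st18cellA w c l α k j (st18gfun w c l)
        ≤ st18Gm w c l α (st18gfun w c l) x := st18_cellA_le_Gm _ hxB
    have hsum : st18Gm w c l α (st18gfun w c l) x
        ≤ ∑ α' : Fin N → Bool, st18Gm w c l α' (st18gfun w c l) x :=
      Finset.single_le_sum (f := fun α' => st18Gm w c l α' (st18gfun w c l) x)
        (fun _ _ => zero_le) (Finset.mem_univ α)
    calc st18nu w (Q ∩ R) / volume R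
        ≤ (36^N * A * volume B) / st18Msig w B := hdiv
      _ = 36^N * A * st18cellA w c l α k j (st18gfun w c l) := hcellA
      _ ≤ 36^N * A * ∑ α' : Fin N → Bool, st18Gm w c l α' (st18gfun w c l) x :=
          mul_le_mul_right (le_trans hGm hsum) _
      _ ≤ 3^N * (st18nu w Q / volume Q)
          + 36^N * A * ∑ α' : Fin N → Bool, st18Gm w c l α' (st18gfun w c l) x :=
          le_add_self
  · -- big cube
    push_neg at hcase
    have key2 : st18nu w (Q ∩ R) * volume Q ≤ (3^N * st18nu w Q) * volume R := by
      have h1 : st18nu w (Q ∩ R) ≤ st18nu w Q := st18nu_mono w Set.inter_subset_left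
      have h2 : volume Q ≤ 3^N * volume R := by
        rw [hQdef, hRdef, st18_volume_cube, st18_volume_cube]
        have h3 : ENNReal.ofReal l ≤ ENNReal.ofReal (3*s) := ENNReal.ofReal_le_ofReal hcase
        calc ENNReal.ofReal l ^ N ≤ ENNReal.ofReal (3*s) ^ N := pow_le_pow_left' h3 N
          _ = (3 * ENNReal.ofReal s) ^ N := by
              rw [ENNReal.ofReal_mul (by norm_num : (0:ℝ) ≤ 3)]
              norm_num
          _ = 3^N * ENNReal.ofReal s ^ N := mul_pow _ _ _
      calc st18nu w (Q ∩ R) * volume Q ≤ st18nu w Q * (3^N * volume R) :=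
            mul_le_mul' h1 h2
        _ = (3^N * st18nu w Q) * volume R := by ring
    have hdiv : st18nu w (Q ∩ R) / volume R ≤ (3^N * st18nu w Q) / volume Q :=
      st18_div_le_div key2 hvolR0 hvolRt hvolQ0 hvolQt
    calc st18nu w (Q ∩ R) / volume R ≤ (3^N * st18nu w Q) / volume Q := hdiv
      _ = 3^N * (st18nu w Q / volume Q) := mul_div_assoc _ _ _
      _ ≤ 3^N * (st18nu w Q / volume Q)
          + 36^N * A * ∑ α' : Fin N → Bool, st18Gm w c l α' (st18gfun w c l) x :=
          le_self_add

end Master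

section Final

variable {N : ℕ}

/-- Per-grid integral bound via Cauchy–Schwarz and the L² estimate. -/
theorem st18_Gm_int {w : Euc N → ℝ} (hw : IsA2Weight w) {c : Euc N} {l : ℝ} (hl : 0 < l)
    (α : Fin N → Bool) :
    ∫⁻ x in cube c l, st18Gm w c l α (st18gfun w c l) x
      ≤ 12 * st18nu w (cube c l) := by
  set Q := cube c l with hQdef
  set G := st18Gm w c l α (st18gfun w c l) with hGdef
  have hGmeas : Measurable G := st18_meas_Gm c l α _
  have hQm : MeasurableSet Q := st18_measurableSet_cube c l
  have hconj : Real.HolderConjugate 2 2 := Real.HolderConjugate.two_two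
  set f : Euc N → ℝ≥0∞ := fun x => G x * (ENNReal.ofReal ((w x)⁻¹))^((1:ℝ)/2) with hf
  set g : Euc N → ℝ≥0∞ := fun x => (ENNReal.ofReal (w x))^((1:ℝ)/2) with hg
  have hfm : AEMeasurable f (volume.restrict Q) :=
    (hGmeas.mul ((st18_meas_dens hw).pow_const _)).aemeasurable
  have hgm : AEMeasurable g (volume.restrict Q) :=
    ((ENNReal.measurable_ofReal.comp hw.meas).pow_const _).aemeasurable
  have hH := ENNReal.lintegral_mul_le_Lp_mul_Lq (volume.restrict Q) hconj hfm hgm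
  have hone : ∀ x, (ENNReal.ofReal ((w x)⁻¹))^((1:ℝ)/2) * (ENNReal.ofReal (w x))^((1:ℝ)/2)
      = 1 := by
    intro x
    rw [← ENNReal.mul_rpow_of_nonneg _ _ (by norm_num : (0:ℝ) ≤ 1/2)]
    rw [← ENNReal.ofReal_mul (le_of_lt (inv_pos.mpr (hw.pos x))),
      inv_mul_cancel₀ (hw.pos x).ne', ENNReal.ofReal_one, ENNReal.one_rpow]
  have hLHS : ∫⁻ x in Q, (f * g) x = ∫⁻ x in Q, G x := by
    apply lintegral_congr
    intro x
    simp only [Pi.mul_apply, hf, hg]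
    rw [mul_assoc, hone x, mul_one]
  have hf2 : ∀ x, f x ^ (2:ℝ) = G x ^ 2 * ENNReal.ofReal ((w x)⁻¹) := by
    intro x
    rw [hf]
    rw [ENNReal.mul_rpow_of_nonneg _ _ (by norm_num : (0:ℝ) ≤ 2)]
    congr 1
    · rw [← ENNReal.rpow_natCast (G x) 2]
      norm_num
    · rw [← ENNReal.rpow_mul]
      norm_num
  have hg2 : ∀ x, g x ^ (2:ℝ) = ENNReal.ofReal (w x) := by
    intro x
    rw [hg, ← ENNReal.rpow_mul]
    norm_num
  have hIf : ∫⁻ x in Q, f x ^ (2:ℝ) ≤ 128 * st18nu w Q := by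
    have heq : ∫⁻ x in Q, f x ^ (2:ℝ) = ∫⁻ x in Q, G x ^ 2 ∂(st18Msig w) := by
      rw [lintegral_congr (fun x => hf2 x)]
      rw [st18Msig, restrict_withDensity hQm,
        lintegral_withDensity_eq_lintegral_mul _ (st18_meas_dens hw) (hGmeas.pow_const 2)]
      apply lintegral_congr
      intro x
      simp only [Pi.mul_apply]
      ring
    rw [heq]
    exact st18_Gm_L2 hw hl α
  have hIg : ∫⁻ x in Q, g x ^ (2:ℝ) = st18nu w Q := lintegral_congr (fun x => hg2 x)
  calc ∫⁻ x in Q, G x = ∫⁻ x in Q, (f * g) x := hLHS.symm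
    _ ≤ (∫⁻ x in Q, f x ^ (2:ℝ)) ^ ((1:ℝ)/2) * (∫⁻ x in Q, g x ^ (2:ℝ)) ^ ((1:ℝ)/2) := hH
    _ ≤ ((128:ℝ≥0∞) * st18nu w Q) ^ ((1:ℝ)/2) * (st18nu w Q) ^ ((1:ℝ)/2) := by
        apply mul_le_mul'
        · exact ENNReal.rpow_le_rpow hIf (by norm_num)
        · rw [hIg]
    _ = (128:ℝ≥0∞) ^ ((1:ℝ)/2) * ((st18nu w Q) ^ ((1:ℝ)/2) * (st18nu w Q) ^ ((1:ℝ)/2)) := by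
        rw [ENNReal.mul_rpow_of_nonneg _ _ (by norm_num : (0:ℝ) ≤ 1/2), mul_assoc]
    _ = (128:ℝ≥0∞) ^ ((1:ℝ)/2) * st18nu w Q := by
        rw [← ENNReal.rpow_add_of_nonneg ((1:ℝ)/2) ((1:ℝ)/2) (by norm_num) (by norm_num)]
        norm_num
    _ ≤ 12 * st18nu w Q := by
        apply mul_le_mul_left
        have h1 : (128:ℝ≥0∞) ≤ (12:ℝ≥0∞)^(2:ℕ) := by norm_num
        calc (128:ℝ≥0∞) ^ ((1:ℝ)/2) ≤ ((12:ℝ≥0∞)^(2:ℕ)) ^ ((1:ℝ)/2) :=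
              ENNReal.rpow_le_rpow h1 (by norm_num)
          _ = 12 := by
              rw [← ENNReal.rpow_natCast (12:ℝ≥0∞) 2, ← ENNReal.rpow_mul]
              norm_num

end Final

/-- `∫_Q M(w·1_Q) dx ≤ C [w]_{A₂} w(Q)` for `A₂` weights `w`. -/
theorem statement_18 (N : ℕ) :
    ∃ C : ℝ, 0 < C ∧
    ∀ w : Euc N → ℝ, IsA2Weight w →
    ∀ (c : Euc N) (l : ℝ), 0 < l →
      ∫⁻ x in cube c l, maximalFn ((cube c l).indicator w) x
        ≤ ENNReal.ofReal (C * A2const w * ∫ x in cube c l, w x) := by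
  classical
  refine ⟨3^N + 12 * 72^N, by positivity, ?_⟩
  intro w hw c l hl
  have hQm : MeasurableSet (cube c l) := st18_measurableSet_cube c l
  have hvolQ0 : volume (cube c l) ≠ 0 := st18_vol_cube_ne_zero c hl
  have hvolQt : volume (cube c l) ≠ ∞ := st18_vol_cube_ne_top c l
  set A := ENNReal.ofReal (A2const w) with hA
  set SG : Euc N → ℝ≥0∞ :=
    fun x => ∑ α : Fin N → Bool, st18Gm w c l α (st18gfun w c l) x with hSG
  have hSGmeas : Measurable SG :=
    Finset.measurable_sum _ (fun α _ => st18_meas_Gm c l α _)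
  set Gb : Euc N → ℝ≥0∞ :=
    fun x => 3^N * (st18nu w (cube c l) / volume (cube c l)) + 36^N * A * SG x with hGb
  have hGbmeas : Measurable Gb := ((hSGmeas.const_mul _).const_add _)
  have hpt : ∀ x ∈ cube c l, maximalFn ((cube c l).indicator w) x ≤ Gb x := by
    intro x hx
    simp only [maximalFn]
    apply iSup_le; intro c'
    apply iSup_le; intro s
    apply iSup_le; intro hs
    apply iSup_le; intro hxR
    rw [st18_ofReal_avg hw c l c' hs]
    exact st18_master hw hl hx c' hs hxR
  have hstep1 : ∫⁻ x in cube c l, maximalFn ((cube c l).indicator w) x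
      ≤ ∫⁻ x in cube c l, Gb x := setLIntegral_mono hGbmeas hpt
  have hstep2 : ∫⁻ x in cube c l, Gb x
      ≤ 3^N * st18nu w (cube c l) + 36^N * A * (2^N * (12 * st18nu w (cube c l))) := by
    rw [hGb]
    rw [lintegral_add_left measurable_const]
    apply add_le_add
    · rw [setLIntegral_const]
      rw [mul_assoc, ENNReal.div_mul_cancel hvolQ0 hvolQt]
    · rw [lintegral_const_mul _ hSGmeas]
      apply mul_le_mul_right
      rw [hSG]
      rw [lintegral_finset_sum _ (fun α _ => st18_meas_Gm c l α _)]
      calc ∑ α : Fin N → Bool, ∫⁻ x in cube c l, st18Gm w c l α (st18gfun w c l) x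
          ≤ ∑ _α : Fin N → Bool, 12 * st18nu w (cube c l) :=
            Finset.sum_le_sum (fun α _ => st18_Gm_int hw hl α)
        _ = 2^N * (12 * st18nu w (cube c l)) := by
            rw [Finset.sum_const, Finset.card_univ]
            rw [nsmul_eq_mul]
            congr 1
            rw [Fintype.card_fun]
            simp
  have hfinal : 3^N * st18nu w (cube c l) + 36^N * A * (2^N * (12 * st18nu w (cube c l)))
      ≤ ((3:ℝ≥0∞)^N + 12 * 72^N) * A * st18nu w (cube c l) := by
    have h1le : (1:ℝ≥0∞) ≤ A := st18_one_le_A hw c hl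
    have hterm1 : (3:ℝ≥0∞)^N * st18nu w (cube c l)
        ≤ 3^N * A * st18nu w (cube c l) := by
      rw [mul_assoc]
      apply mul_le_mul_right
      calc st18nu w (cube c l) = 1 * st18nu w (cube c l) := (one_mul _).symm
        _ ≤ A * st18nu w (cube c l) := mul_le_mul_left h1le _
    have hterm2 : (36:ℝ≥0∞)^N * A * (2^N * (12 * st18nu w (cube c l)))
        = 12 * 72^N * A * st18nu w (cube c l) := by
      have h72 : (72:ℝ≥0∞)^N = 36^N * 2^N := by rw [← mul_pow]; norm_num
      rw [h72]
      ring
    calc 3^N * st18nu w (cube c l) + 36^N * A * (2^N * (12 * st18nu w (cube c l)))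
        ≤ 3^N * A * st18nu w (cube c l) + 12 * 72^N * A * st18nu w (cube c l) :=
          add_le_add hterm1 (le_of_eq hterm2)
      _ = ((3:ℝ≥0∞)^N + 12 * 72^N) * A * st18nu w (cube c l) := by ring
  have hconv : ENNReal.ofReal ((3^N + 12 * 72^N) * A2const w * ∫ x in cube c l, w x)
      = ((3:ℝ≥0∞)^N + 12 * 72^N) * A * st18nu w (cube c l) := by
    have hCpos : (0:ℝ) ≤ 3^N + 12*72^N := by positivity
    have hApos : 0 < A2const w := st18_A2const_pos hw c hl
    have hint : IntegrableOn w (cube c l) volume :=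
      st18_integrableOn_of_subset_cube hw.locInt c l le_rfl.subset
    rw [ENNReal.ofReal_mul (by positivity : (0:ℝ) ≤ (3^N + 12*72^N) * A2const w)]
    rw [ENNReal.ofReal_mul hCpos]
    rw [← st18nu_eq_ofReal hw hint]
    rw [hA]
    congr 1
    congr 1
    rw [ENNReal.ofReal_add (by positivity) (by positivity),
      ENNReal.ofReal_pow (by norm_num : (0:ℝ) ≤ 3),
      ENNReal.ofReal_mul (by norm_num : (0:ℝ) ≤ 12),
      ENNReal.ofReal_pow (by norm_num : (0:ℝ) ≤ 72)]
    norm_num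
  rw [hconv]
  exact le_trans hstep1 (le_trans hstep2 hfinal)
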